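/- For fixed λ > 0, the regularized upper incomplete gamma function a ↦ Q(a,λ) = Γ(a,λ)/Γ(a) is strictly increasing on (0,∞), tends to 1 as a → ∞, and satisfies 0 < Q(a,λ) < 1 for all a > 0. -/

import Mathlib

open Real Filter MeasureTheory

/-- Upper incomplete gamma function `Γ(a, x) = ∫_x^∞ t^(a-1) e^(-t) dt`. -/
noncomputable def upperGamma (a x : ℝ) : ℝ := ∫ t in Set.Ioi x, t ^ (a - 1) * Real.exp (-t)

/-- Regularized upper incomplete gamma function `Q(a, x) = Γ(a, x) / Γ(a)`. -/
noncomputable def regGamma (a x : ℝ) : ℝ := upperGamma a x / Real.Gamma a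

noncomputable def lowG (a lam : ℝ) : ℝ := ∫ t in Set.Ioc 0 lam, t ^ (a - 1) * Real.exp (-t)

lemma intOn {a : ℝ} (ha : 0 < a) :
    IntegrableOn (fun t : ℝ => t ^ (a - 1) * Real.exp (-t)) (Set.Ioi 0) :=
  (Real.GammaIntegral_convergent ha).congr_fun (fun t _ => mul_comm _ _) measurableSet_Ioi

lemma gamma_split {a lam : ℝ} (ha : 0 < a) (hlam : 0 < lam) :
    Real.Gamma a = lowG a lam + upperGamma a lam := by
  have h1 : Real.Gamma a = ∫ t in Set.Ioi 0, t ^ (a - 1) * Real.exp (-t) := by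
    rw [Real.Gamma_eq_integral ha]
    exact setIntegral_congr_fun measurableSet_Ioi (fun t _ => mul_comm _ _)
  rw [h1, ← Set.Ioc_union_Ioi_eq_Ioi hlam.le,
    setIntegral_union (Set.Ioc_disjoint_Ioi le_rfl) measurableSet_Ioi
      ((intOn ha).mono_set Set.Ioc_subset_Ioi_self) ((intOn ha).mono_set (Set.Ioi_subset_Ioi hlam.le))]
  rfl

lemma upperGamma_pos {a lam : ℝ} (ha : 0 < a) (hlam : 0 < lam) : 0 < upperGamma a lam := by
  rw [upperGamma, setIntegral_pos_iff_support_of_nonneg_ae]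
  · have hsub : Set.Ioi lam ⊆ Function.support fun t : ℝ => t ^ (a - 1) * Real.exp (-t) := by
      intro t ht
      exact ne_of_gt (mul_pos (Real.rpow_pos_of_pos (hlam.trans ht) _) (Real.exp_pos _))
    rw [Set.inter_eq_right.mpr hsub]
    simp
  · filter_upwards [ae_restrict_mem measurableSet_Ioi] with t ht
    exact le_of_lt (mul_pos (Real.rpow_pos_of_pos (hlam.trans ht) _) (Real.exp_pos _))
  · exact (intOn ha).mono_set (Set.Ioi_subset_Ioi hlam.le)

lemma lowG_pos {a lam : ℝ} (ha : 0 < a) (hlam : 0 < lam) : 0 < lowG a lam := by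
  rw [lowG, setIntegral_pos_iff_support_of_nonneg_ae]
  · have hsub : Set.Ioc 0 lam ⊆ Function.support fun t : ℝ => t ^ (a - 1) * Real.exp (-t) := by
      intro t ht
      exact ne_of_gt (mul_pos (Real.rpow_pos_of_pos ht.1 _) (Real.exp_pos _))
    rw [Set.inter_eq_right.mpr hsub]
    simp [hlam]
  · filter_upwards [ae_restrict_mem measurableSet_Ioc] with t ht
    exact le_of_lt (mul_pos (Real.rpow_pos_of_pos ht.1 _) (Real.exp_pos _))
  · exact (intOn ha).mono_set Set.Ioc_subset_Ioi_self

lemma lowG_le {a b lam : ℝ} (ha : 0 < a) (hb : 0 < b) (hab : a < b) (hlam : 0 < lam) :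
    lowG b lam ≤ lam ^ (b - a) * lowG a lam := by
  have hc : (0:ℝ) < b - a := sub_pos.mpr hab
  rw [lowG, lowG, ← integral_const_mul]
  refine setIntegral_mono_on ((intOn hb).mono_set Set.Ioc_subset_Ioi_self)
    (((intOn ha).mono_set Set.Ioc_subset_Ioi_self).const_mul _) measurableSet_Ioc ?_
  intro t ht
  have h1 : t ^ (b - 1) = t ^ (b - a) * t ^ (a - 1) := by
    rw [← Real.rpow_add ht.1]; ring_nf
  rw [h1, mul_assoc]
  exact mul_le_mul_of_nonneg_right (Real.rpow_le_rpow ht.1.le ht.2 hc.le)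
    (le_of_lt (mul_pos (Real.rpow_pos_of_pos ht.1 _) (Real.exp_pos _)))

lemma upperGamma_gt {a b lam : ℝ} (ha : 0 < a) (hb : 0 < b) (hab : a < b) (hlam : 0 < lam) :
    lam ^ (b - a) * upperGamma a lam < upperGamma b lam := by
  have hc : (0:ℝ) < b - a := sub_pos.mpr hab
  have hia : IntegrableOn (fun t : ℝ => lam ^ (b - a) * (t ^ (a - 1) * Real.exp (-t))) (Set.Ioi lam) :=
    ((intOn ha).mono_set (Set.Ioi_subset_Ioi hlam.le)).const_mul _
  have hib : IntegrableOn (fun t : ℝ => t ^ (b - 1) * Real.exp (-t)) (Set.Ioi lam) :=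
    (intOn hb).mono_set (Set.Ioi_subset_Ioi hlam.le)
  have key : 0 < ∫ t in Set.Ioi lam,
      (t ^ (b - 1) * Real.exp (-t) - lam ^ (b - a) * (t ^ (a - 1) * Real.exp (-t))) := by
    rw [setIntegral_pos_iff_support_of_nonneg_ae]
    · have hsub : Set.Ioi lam ⊆ Function.support fun t : ℝ =>
          t ^ (b - 1) * Real.exp (-t) - lam ^ (b - a) * (t ^ (a - 1) * Real.exp (-t)) := by
        intro t ht
        have h1 : t ^ (b - 1) = t ^ (b - a) * t ^ (a - 1) := by
          rw [← Real.rpow_add (hlam.trans ht)]; ring_nf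
        have h2 : lam ^ (b - a) < t ^ (b - a) := Real.rpow_lt_rpow hlam.le ht hc
        have : lam ^ (b - a) * (t ^ (a - 1) * Real.exp (-t)) < t ^ (b - 1) * Real.exp (-t) := by
          rw [h1, mul_assoc]
          exact mul_lt_mul_of_pos_right h2
            (mul_pos (Real.rpow_pos_of_pos (hlam.trans ht) _) (Real.exp_pos _))
        exact ne_of_gt (sub_pos.mpr this)
      rw [Set.inter_eq_right.mpr hsub]
      simp
    · filter_upwards [ae_restrict_mem measurableSet_Ioi] with t ht
      have h1 : t ^ (b - 1) = t ^ (b - a) * t ^ (a - 1) := by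
        rw [← Real.rpow_add (hlam.trans ht)]; ring_nf
      have h2 : lam ^ (b - a) ≤ t ^ (b - a) := (Real.rpow_lt_rpow hlam.le ht hc).le
      simp only [Pi.zero_apply]
      rw [sub_nonneg, h1, mul_assoc]
      exact mul_le_mul_of_nonneg_right h2
        (le_of_lt (mul_pos (Real.rpow_pos_of_pos (hlam.trans ht) _) (Real.exp_pos _)))
    · exact hib.sub hia
  rw [integral_sub hib hia, integral_const_mul] at key
  rw [upperGamma, upperGamma]
  linarith

lemma lowG_le_rpow {a lam : ℝ} (ha : 1 ≤ a) (hlam : 0 < lam) : lowG a lam ≤ lam ^ a := by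
  have h1 : lowG a lam ≤ ∫ _ in Set.Ioc (0:ℝ) lam, lam ^ (a - 1) := by
    rw [lowG]
    refine setIntegral_mono_on ((intOn (by linarith)).mono_set Set.Ioc_subset_Ioi_self)
      ((integrableOn_const_iff).mpr (Or.inr (by simp [Real.volume_Ioc]))) measurableSet_Ioc ?_
    intro t ht
    calc t ^ (a - 1) * Real.exp (-t) ≤ lam ^ (a - 1) * 1 := by
          refine mul_le_mul (Real.rpow_le_rpow ht.1.le ht.2 (by linarith))
            (Real.exp_le_one_iff.mpr (by linarith [ht.1])) (Real.exp_pos _).le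
            (Real.rpow_nonneg hlam.le _)
      _ = lam ^ (a - 1) := mul_one _
  rw [setIntegral_const] at h1
  have h2 : (volume (Set.Ioc (0:ℝ) lam)).toReal = lam := by
    simp [Real.volume_Ioc, ENNReal.toReal_ofReal hlam.le]
  rw [measureReal_def, h2] at h1
  calc lowG a lam ≤ lam • lam ^ (a - 1) := h1
    _ = lam ^ (1:ℝ) * lam ^ (a - 1) := by rw [smul_eq_mul, Real.rpow_one]
    _ = lam ^ a := by rw [← Real.rpow_add hlam]; ring_nf

lemma gamma_ge {a lam : ℝ} (ha : 1 ≤ a) (hlam : 0 < lam) :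
    (2 * lam) ^ (a - 1) * Real.exp (-(2 * lam + 1)) ≤ Real.Gamma a := by
  have ha0 : (0:ℝ) < a := by linarith
  have h2lam : (0:ℝ) < 2 * lam := by linarith
  have hG : Real.Gamma a = ∫ t in Set.Ioi 0, t ^ (a - 1) * Real.exp (-t) := by
    rw [Real.Gamma_eq_integral ha0]
    exact setIntegral_congr_fun measurableSet_Ioi (fun t _ => mul_comm _ _)
  have hsub : Set.Ioc (2 * lam) (2 * lam + 1) ⊆ Set.Ioi (0:ℝ) :=
    fun t ht => lt_trans h2lam ht.1
  have h1 : ∫ t in Set.Ioc (2 * lam) (2 * lam + 1), t ^ (a - 1) * Real.exp (-t)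
      ≤ ∫ t in Set.Ioi 0, t ^ (a - 1) * Real.exp (-t) := by
    refine setIntegral_mono_set (intOn ha0) ?_ (HasSubset.Subset.eventuallyLE hsub)
    filter_upwards [ae_restrict_mem measurableSet_Ioi] with t ht
    exact le_of_lt (mul_pos (Real.rpow_pos_of_pos ht _) (Real.exp_pos _))
  have h0 : (∫ _ in Set.Ioc (2 * lam) (2 * lam + 1),
        ((2 * lam) ^ (a - 1) * Real.exp (-(2 * lam + 1)) : ℝ))
      ≤ ∫ t in Set.Ioc (2 * lam) (2 * lam + 1), t ^ (a - 1) * Real.exp (-t) := by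
    refine setIntegral_mono_on ((integrableOn_const_iff).mpr (Or.inr (by simp [Real.volume_Ioc])))
      ((intOn ha0).mono_set hsub) measurableSet_Ioc ?_
    intro t ht
    refine mul_le_mul (Real.rpow_le_rpow h2lam.le ht.1.le (by linarith))
      (Real.exp_le_exp.mpr (by linarith [ht.2])) (Real.exp_pos _).le
      (Real.rpow_nonneg (le_trans h2lam.le ht.1.le) _)
  rw [setIntegral_const] at h0
  have hm : (volume (Set.Ioc (2 * lam) (2 * lam + 1))).toReal = 1 := by
    simp [Real.volume_Ioc]
  rw [measureReal_def, hm, one_smul] at h0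
  rw [hG]; exact le_trans h0 h1

lemma ratio_tendsto (lam : ℝ) (hlam : 0 < lam) :
    Tendsto (fun a => lowG a lam / Real.Gamma a) atTop (nhds 0) := by
  set C : ℝ := lam * Real.exp (2 * lam + 1) with hC
  have hCpos : 0 < C := mul_pos hlam (Real.exp_pos _)
  have hbound : ∀ a : ℝ, 1 ≤ a →
      lowG a lam / Real.Gamma a ≤ C * (1 / 2 : ℝ) ^ (a - 1) := by
    intro a ha
    have ha0 : (0:ℝ) < a := by linarith
    have hden : (0:ℝ) < (2 * lam) ^ (a - 1) * Real.exp (-(2 * lam + 1)) :=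
      mul_pos (Real.rpow_pos_of_pos (by linarith) _) (Real.exp_pos _)
    have hGpos := Real.Gamma_pos_of_pos ha0
    have h1 : lowG a lam / Real.Gamma a
        ≤ lam ^ a / ((2 * lam) ^ (a - 1) * Real.exp (-(2 * lam + 1))) :=
      div_le_div₀ (Real.rpow_nonneg hlam.le _) (lowG_le_rpow ha hlam) hden (gamma_ge ha hlam)
    have h2 : lam ^ a / ((2 * lam) ^ (a - 1) * Real.exp (-(2 * lam + 1)))
        = C * (1 / 2 : ℝ) ^ (a - 1) := by
      rw [Real.mul_rpow (by norm_num) hlam.le]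
      have hlamr : lam ^ a = lam * lam ^ (a - 1) := by
        have h := Real.rpow_add hlam 1 (a - 1)
        rw [Real.rpow_one] at h
        simpa [show (1:ℝ) + (a - 1) = a by ring] using h
      rw [hlamr, Real.exp_neg]
      have h12 : ((1:ℝ) / 2) ^ (a - 1) = ((2:ℝ) ^ (a - 1))⁻¹ := by
        rw [one_div, Real.inv_rpow (by norm_num)]
      rw [h12, hC]
      have h2pos : (0:ℝ) < (2:ℝ) ^ (a - 1) := Real.rpow_pos_of_pos two_pos _
      have hlp : (0:ℝ) < lam ^ (a - 1) := Real.rpow_pos_of_pos hlam _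
      field_simp
    linarith [h1, h2.le, h2.ge]
  have hg : Tendsto (fun a : ℝ => C * (1 / 2 : ℝ) ^ (a - 1)) atTop (nhds 0) := by
    have := (tendsto_rpow_atTop_of_base_lt_one (1/2) (by norm_num) (by norm_num)).comp
      (tendsto_atTop_add_const_right atTop (-1) tendsto_id)
    have h := this.const_mul C
    simpa [Function.comp, sub_eq_add_neg] using h
  refine tendsto_of_tendsto_of_tendsto_of_le_of_le' tendsto_const_nhds hg ?_ ?_
  · filter_upwards [eventually_ge_atTop (1:ℝ)] with a ha
    exact div_nonneg (lowG_pos (by linarith) hlam).le (Real.Gamma_pos_of_pos (by linarith)).le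
  · filter_upwards [eventually_ge_atTop (1:ℝ)] with a ha
    exact hbound a ha

/-- For fixed `λ > 0`, `a ↦ Q(a, λ)` is strictly increasing on `(0, ∞)`, tends to `1` at
infinity, and satisfies `0 < Q(a, λ) < 1` for all `a > 0`. -/
theorem regGamma_strictMono_tendsto_one (lam : ℝ) (hlam : 0 < lam) :
    StrictMonoOn (fun a => regGamma a lam) (Set.Ioi 0) ∧
    Tendsto (fun a => regGamma a lam) atTop (nhds 1) ∧
    ∀ a : ℝ, 0 < a → 0 < regGamma a lam ∧ regGamma a lam < 1 := by
  have hQ1 : ∀ a : ℝ, 0 < a → 0 < regGamma a lam ∧ regGamma a lam < 1 := by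
    intro a ha
    have hG := Real.Gamma_pos_of_pos ha
    constructor
    · exact div_pos (upperGamma_pos ha hlam) hG
    · rw [regGamma, div_lt_one hG, gamma_split ha hlam]
      linarith [lowG_pos ha hlam]
  refine ⟨?_, ?_, hQ1⟩
  · intro a ha b hb hab
    simp only [Set.mem_Ioi] at ha hb
    have hGa := Real.Gamma_pos_of_pos ha
    have hGb := Real.Gamma_pos_of_pos hb
    simp only [regGamma]
    rw [div_lt_div_iff₀ hGa hGb, gamma_split ha hlam, gamma_split hb hlam]
    have hA := lowG_le ha hb hab hlam
    have hB := upperGamma_gt ha hb hab hlam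
    have hUa := upperGamma_pos ha hlam
    have hLa := lowG_pos ha hlam
    nlinarith [mul_le_mul_of_nonneg_left hA hUa.le, mul_lt_mul_of_pos_right hB hLa]
  · have hcongr : ∀ᶠ a in atTop, 1 - lowG a lam / Real.Gamma a = regGamma a lam := by
      filter_upwards [eventually_gt_atTop (0:ℝ)] with a ha
      have hG := (Real.Gamma_pos_of_pos ha).ne'
      have hsplit := gamma_split ha hlam
      rw [regGamma]
      field_simp
      linarith
    have h := (tendsto_const_nhds.sub (ratio_tendsto lam hlam) :
      Tendsto (fun a => 1 - lowG a lam / Real.Gamma a) atTop (nhds (1 - 0)))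
    rw [sub_zero] at h
    exact Tendsto.congr' hcongr h
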